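/- Let G be a group, h ∈ G, p_h : G → Z_h defined by p_h(g) = g·s(Z_h·g)⁻¹ from a section s of the right cosets. For a tuple (g_0,...,g_n) with g_0···g_n = r⁻¹ h r, define π_h(g_0,...,g_n) = (p_h(r g_0 ··· g_n)⁻¹ h p_h(r g_0), p_h(r g_0)⁻¹ p_h(r g_0 g_1), ..., p_h(r g_0 ··· g_{n-1})⁻¹ p_h(r g_0 ··· g_n)). Then all entries of π_h(g_0,...,g_n) lie in Z_h, the product of its entries is conjugate (in Z_h) to h, and the value is independent of the choice of r satisfying g_0···g_n = r⁻¹ h r. -/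

import Mathlib

/-- `π_h` on a basis tuple `(g_0,...,g_n)` with `g_0⋯g_n = r⁻¹ h r`:
`(p_h(r g_0⋯g_n)⁻¹ h p_h(r g_0), p_h(r g_0)⁻¹ p_h(r g_0 g_1), ...,
 p_h(r g_0⋯g_{n-1})⁻¹ p_h(r g_0⋯g_n))`. -/
def pih {G : Type*} [Group G] (h : G) (p : G → G) (r : G) (l : List G) : List G :=
  let m := ((l.scanl (· * ·) r).tail).map p
  ((m.getLastD 1)⁻¹ * h * m.headD 1) :: List.zipWith (fun a b => a⁻¹ * b) m.dropLast m.tail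

private lemma of_mem_zipWith' {α : Type*} {f : α → α → α} :
    ∀ {s t : List α} {x : α}, x ∈ List.zipWith f s t → ∃ a ∈ s, ∃ b ∈ t, x = f a b := by
  intro s
  induction s with
  | nil => intro t x hx; simp at hx
  | cons a s ih =>
    intro t x hx
    cases t with
    | nil => simp at hx
    | cons b t =>
      rw [List.zipWith_cons_cons, List.mem_cons] at hx
      rcases hx with hx | hx
      · exact ⟨a, by simp, b, by simp, hx⟩
      · obtain ⟨a', ha', b', hb', hx⟩ := ih hx
        exact ⟨a', by simp [ha'], b', by simp [hb'], hx⟩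

private lemma getLastD_mem' {α : Type*} : ∀ (m : List α) (d : α), m ≠ [] → m.getLastD d ∈ m
  | [], _, hne => absurd rfl hne
  | [x], _, _ => by simp
  | x :: y :: t, d, _ => by
    rw [List.getLastD_cons]
    exact List.mem_cons_of_mem x (getLastD_mem' (y :: t) x (by simp))

private lemma headD_mem' {α : Type*} : ∀ (m : List α) (d : α), m ≠ [] → m.headD d ∈ m
  | [], _, hne => absurd rfl hne
  | x :: t, _, _ => by simp

private lemma getLastD_map_mul {G : Type*} [Group G] (a : G) :
    ∀ (m : List G) (d : G), (m.map (a * ·)).getLastD (a * d) = a * m.getLastD d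
  | [], d => by simp
  | x :: t, d => by
    rw [List.map_cons, List.getLastD_cons, List.getLastD_cons]
    exact getLastD_map_mul a t x

private lemma telescope {G : Type*} [Group G] :
    ∀ (m : List G), m ≠ [] →
      (List.zipWith (fun a b => a⁻¹ * b) m.dropLast m.tail).prod = (m.headD 1)⁻¹ * m.getLastD 1
  | [], hne => absurd rfl hne
  | [x], _ => by simp
  | x :: y :: t, _ => by
    rw [show List.zipWith (fun a b => a⁻¹ * b) (x :: y :: t).dropLast (x :: y :: t).tail
        = (x⁻¹ * y) :: List.zipWith (fun a b => a⁻¹ * b) (y :: t).dropLast (y :: t).tail from rfl,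
      List.prod_cons, telescope (y :: t) (by simp)]
    simp [List.getLastD_cons, mul_assoc]

private lemma scanl_mul {G : Type*} [Group G] (a : G) :
    ∀ (l : List G) (r : G), l.scanl (· * ·) (a * r) = (l.scanl (· * ·) r).map (a * ·)
  | [], r => by simp
  | x :: l, r => by
    rw [List.scanl_cons, List.scanl_cons, mul_assoc, scanl_mul a l (r * x)]
    simp

theorem statement9 {G : Type*} [Group G] (h : G) (p : G → G)
    (hpZ : ∀ g : G, p g * h = h * p g)
    (hpe : ∀ a g : G, a * h = h * a → p (a * g) = a * p g) (n : ℕ) :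
    (∀ (l : List G) (r : G), l.length = n + 1 → l.prod = r⁻¹ * h * r →
      (∀ a ∈ pih h p r l, a * h = h * a) ∧
      (∃ a : G, a * h = h * a ∧ (pih h p r l).prod = a⁻¹ * h * a)) ∧
    (∀ (l : List G) (r r' : G), l.length = n + 1 →
      l.prod = r⁻¹ * h * r → l.prod = r'⁻¹ * h * r' → pih h p r l = pih h p r' l) := by
  have hZmul : ∀ x y : G, x * h = h * x → y * h = h * y → (x * y) * h = h * (x * y) := by
    intro x y hx hy
    rw [mul_assoc, hy, ← mul_assoc, hx, mul_assoc]
  have hZinv : ∀ x : G, x * h = h * x → x⁻¹ * h = h * x⁻¹ := by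
    intro x hx
    calc x⁻¹ * h = x⁻¹ * (h * x) * x⁻¹ := by group
    _ = x⁻¹ * (x * h) * x⁻¹ := by rw [← hx]
    _ = h * x⁻¹ := by group
  constructor
  · intro l r hlen _
    set m : List G := ((l.scanl (· * ·) r).tail).map p with hm
    have hmne : m ≠ [] := by
      have : m.length = n + 1 := by simp [hm, List.length_scanl, hlen]
      intro hc; rw [hc] at this; simp at this
    have hmem : ∀ x ∈ m, x * h = h * x := by
      intro x hx
      rw [hm, List.mem_map] at hx
      obtain ⟨g, _, rfl⟩ := hx
      exact hpZ g
    have hlast : (m.getLastD 1) * h = h * m.getLastD 1 := hmem _ (getLastD_mem' m 1 hmne)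
    have hhead : (m.headD 1) * h = h * m.headD 1 := hmem _ (headD_mem' m 1 hmne)
    constructor
    · intro a ha
      rw [pih] at ha
      simp only [← hm] at ha
      rcases List.mem_cons.mp ha with rfl | ha
      · exact hZmul _ _ (hZmul _ _ (hZinv _ hlast) rfl) hhead
      · obtain ⟨x, hx, y, hy, rfl⟩ := of_mem_zipWith' ha
        exact hZmul _ _ (hZinv _ (hmem x (List.dropLast_subset _ hx)))
          (hmem y (List.tail_subset _ hy))
    · refine ⟨m.getLastD 1, hlast, ?_⟩
      rw [pih]
      simp only [← hm, List.prod_cons, telescope m hmne]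
      group
  · intro l r r' hlen hr hr'
    have hc1 : r⁻¹ * h * r = r'⁻¹ * h * r' := hr ▸ hr'
    have hcomm : (r' * r⁻¹) * h = h * (r' * r⁻¹) := by
      calc (r' * r⁻¹) * h = r' * (r⁻¹ * h * r) * r⁻¹ := by group
      _ = r' * (r'⁻¹ * h * r') * r⁻¹ := by rw [hc1]
      _ = h * (r' * r⁻¹) := by group
    set a := r' * r⁻¹ with ha
    have hr'a : r' = a * r := by rw [ha]; group
    rw [pih, pih, hr'a, scanl_mul]
    have htail : ((l.scanl (· * ·) r).map (a * ·)).tail = ((l.scanl (· * ·) r).tail).map (a * ·) :=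
      List.map_tail.symm
    rw [htail, List.map_map]
    have hpm : ((l.scanl (· * ·) r).tail).map (p ∘ (a * ·))
        = (((l.scanl (· * ·) r).tail).map p).map (a * ·) := by
      rw [List.map_map]
      exact List.map_congr_left (fun g _ => hpe a g hcomm)
    rw [hpm]
    set m : List G := ((l.scanl (· * ·) r).tail).map p with hm
    have hmne : m ≠ [] := by
      have : m.length = n + 1 := by simp [hm, List.length_scanl, hlen]
      intro hc; rw [hc] at this; simp at this
    have hinvha : a⁻¹ * h * a = h := by
      rw [mul_assoc, ← hcomm, ← mul_assoc, inv_mul_cancel, one_mul]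
    obtain ⟨x, t, hxt⟩ := List.exists_cons_of_ne_nil hmne
    rw [hxt]
    congr 1
    · have hL : ((x :: t).map (a * ·)).getLastD 1 = a * (x :: t).getLastD 1 := by
        rw [List.map_cons, List.getLastD_cons, List.getLastD_cons]
        exact getLastD_map_mul a t x
      have hH : ((x :: t).map (a * ·)).headD 1 = a * (x :: t).headD 1 := by simp
      rw [hL, hH]
      set L := (x :: t).getLastD 1
      set H := (x :: t).headD 1
      calc L⁻¹ * h * H = L⁻¹ * (a⁻¹ * h * a) * H := by rw [hinvha]
      _ = (a * L)⁻¹ * h * (a * H) := by group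
    · rw [← List.map_dropLast, ← List.map_tail, List.zipWith_map]
      have hfun : (fun u v : G => (a * u)⁻¹ * (a * v)) = fun u v : G => u⁻¹ * v := by
        funext u v; group
      rw [hfun]
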